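/- arXiv:2004.03062 — 2 statements merged into one kernel-verified Lean document; each statement's English description precedes it below -/
import Mathlib

section
/- If x and y are unit vectors lying in distinct orthogonal summands of a Hilbert space direct sum, and z, w are any unit vectors each lying in some summand, then max(‖x−z‖−1,0) + max(‖z−w‖−1,0) + max(‖w−y‖−1,0) ≥ √2 − 1. -/
lemma cross_norm {H : Type*} [NormedAddCommGroup H]
    [InnerProductSpace ℝ H] (u v : H) (hu : ‖u‖ = 1) (hv : ‖v‖ = 1)
    (h : (inner ℝ u v : ℝ) = 0) : ‖u - v‖ = Real.sqrt 2 := by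
  have h2 : ‖u - v‖ ^ 2 = 2 := by
    rw [@norm_sub_sq_real, hu, hv, h]; ring
  rw [← h2, Real.sqrt_sq (norm_nonneg _)]

theorem chain_across_spheres {H : Type*} [NormedAddCommGroup H]
    [InnerProductSpace ℝ H] [CompleteSpace H] {ι : Type*} (V : ι → Submodule ℝ H)
    (horth : ∀ m n : ι, m ≠ n → ∀ x ∈ V m, ∀ y ∈ V n, (inner ℝ x y : ℝ) = 0)
    {m n : ι} (hmn : m ≠ n) {x y z w : H}
    (hxm : x ∈ V m) (hx : ‖x‖ = 1) (hyn : y ∈ V n) (hy : ‖y‖ = 1)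
    (hz : ∃ k, z ∈ V k ∧ ‖z‖ = 1) (hw : ∃ k, w ∈ V k ∧ ‖w‖ = 1) :
    Real.sqrt 2 - 1 ≤
      max (‖x - z‖ - 1) 0 + max (‖z - w‖ - 1) 0 + max (‖w - y‖ - 1) 0 := by
  obtain ⟨k, hzk, hz1⟩ := hz
  obtain ⟨l, hwl, hw1⟩ := hw
  have key : ∀ (u v : H), ‖u - v‖ = Real.sqrt 2 →
      Real.sqrt 2 - 1 ≤ max (‖u - v‖ - 1) 0 :=
    fun u v h => le_max_of_le_left (by rw [h])
  have h0 : ∀ (u v : H), (0:ℝ) ≤ max (‖u - v‖ - 1) 0 := fun u v => le_max_right _ _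
  by_cases hkm : k = m
  · by_cases hln : l = n
    · have := key z w (cross_norm z w hz1 hw1
        (horth k l (by rw [hkm, hln]; exact hmn) z hzk w hwl))
      linarith [h0 x z, h0 w y]
    · have := key w y (cross_norm w y hw1 hy (horth l n hln w hwl y hyn))
      linarith [h0 x z, h0 z w]
  · have := key x z (cross_norm x z hx hz1 (horth m k (fun h => hkm h.symm) x hxm z hzk))
    linarith [h0 z w, h0 w y]
end

section
/- In the real Banach space c₀ (sequences converging to 0 with the sup norm), no infinite-dimensional closed subspace is isomorphic (linearly homeomorphic) to a Hilbert space. -/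
open Filter Finset

/-- Pointwise norm bound for zero-at-infinity functions. -/
lemma zaim_apply_le_norm (f : ZeroAtInftyContinuousMap ℕ ℝ) (k : ℕ) : |f k| ≤ ‖f‖ := by
  have := BoundedContinuousFunction.norm_coe_le_norm f.toBCF k
  rwa [ZeroAtInftyContinuousMap.norm_toBCF_eq_norm] at this

lemma zaim_norm_le (f : ZeroAtInftyContinuousMap ℕ ℝ) {M : ℝ} (hM : 0 ≤ M)
    (h : ∀ k, |f k| ≤ M) : ‖f‖ ≤ M := by
  rw [← ZeroAtInftyContinuousMap.norm_toBCF_eq_norm]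
  exact BoundedContinuousFunction.norm_le hM |>.mpr h

theorem c0_no_hilbert_subspace
    (V : Submodule ℝ (ZeroAtInftyContinuousMap ℕ ℝ))
    (hclosed : IsClosed (V : Set (ZeroAtInftyContinuousMap ℕ ℝ)))
    (hinf : ¬ FiniteDimensional ℝ V)
    (H : Type) [NormedAddCommGroup H] [InnerProductSpace ℝ H] [CompleteSpace H] :
    IsEmpty (V ≃L[ℝ] H) := by
  constructor
  intro T
  letI : SeminormedAddCommGroup V := inferInstance
  letI : NormedSpace ℝ V := inferInstance
  -- H is infinite dimensional
  have hinfH : ¬ FiniteDimensional ℝ H := fun _ => hinf T.toLinearEquiv.symm.finiteDimensional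
  -- get an orthonormal sequence `u : ℕ → H`
  obtain ⟨w, b, hb⟩ := exists_hilbertBasis ℝ H
  have hwinf : w.Infinite := by
    by_contra hfin
    rw [Set.not_infinite] at hfin
    apply hinfH
    have hdense : (Submodule.span ℝ (Set.range (⇑b))).topologicalClosure = ⊤ := b.dense_span
    rw [hb, Subtype.range_coe] at hdense
    have hcl : IsClosed ((Submodule.span ℝ w : Submodule ℝ H) : Set H) :=
      haveI : FiniteDimensional ℝ (Submodule.span ℝ w) :=
        FiniteDimensional.span_of_finite ℝ hfin
      (Submodule.span ℝ w).closed_of_finiteDimensional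
    have htop : (Submodule.span ℝ w : Submodule ℝ H) = ⊤ := by
      rw [← hcl.submodule_topologicalClosure_eq]; exact hdense
    haveI : FiniteDimensional ℝ (Submodule.span ℝ w) :=
      FiniteDimensional.span_of_finite ℝ hfin
    exact (LinearEquiv.ofTop _ htop).finiteDimensional
  haveI := hwinf.to_subtype
  let e : ℕ ↪ w := Infinite.natEmbedding w
  let u : ℕ → H := fun i => b (e i)
  have hu : Orthonormal ℝ u := b.orthonormal.comp e e.injective
  -- pull back to c₀
  obtain ⟨C, hCpos, hCb⟩ := SemilinearMapClass.bound_of_continuous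
    (T.symm.toLinearEquiv.toLinearMap : H →ₗ[ℝ] V) T.symm.continuous
  obtain ⟨Ct, hCtpos, hCtb⟩ := SemilinearMapClass.bound_of_continuous
    (T.toLinearEquiv.toLinearMap : V →ₗ[ℝ] H) T.continuous
  let v : ℕ → ZeroAtInftyContinuousMap ℕ ℝ :=
    fun i => ((T.symm (u i) : V) : ZeroAtInftyContinuousMap ℕ ℝ)
  have hC0 : (0:ℝ) ≤ C := hCpos.le
  have hunorm : ∀ i, ‖u i‖ = 1 := hu.1
  have hcoe_norm : ∀ x : V, ‖(x : ZeroAtInftyContinuousMap ℕ ℝ)‖ = ‖x‖ := fun x => rfl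
  have hvC : ∀ i, ‖v i‖ ≤ C := by
    intro i
    calc ‖v i‖ = ‖T.symm (u i)‖ := hcoe_norm _
      _ ≤ C * ‖u i‖ := hCb _
      _ = C := by rw [hunorm i, mul_one]
  -- coordinates tend to zero along the sequence (weak nullity via Bessel)
  have hcoord : ∀ k : ℕ, Tendsto (fun i => v i k) atTop (nhds 0) := by
    intro k
    let fL : H →ₗ[ℝ] ℝ :=
      { toFun := fun y => ((T.symm y : V) : ZeroAtInftyContinuousMap ℕ ℝ) k
        map_add' := fun x y => by simp
        map_smul' := fun c x => by simp }
    have hfb : ∀ y, ‖fL y‖ ≤ C * ‖y‖ := by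
      intro y
      have h1 : |((T.symm y : V) : ZeroAtInftyContinuousMap ℕ ℝ) k|
          ≤ ‖((T.symm y : V) : ZeroAtInftyContinuousMap ℕ ℝ)‖ := zaim_apply_le_norm _ k
      have h2 : ‖((T.symm y : V) : ZeroAtInftyContinuousMap ℕ ℝ)‖ ≤ C * ‖y‖ := by
        rw [hcoe_norm]; exact hCb y
      simpa [fL, Real.norm_eq_abs] using h1.trans h2
    let f : H →L[ℝ] ℝ := fL.mkContinuous C hfb
    let y₀ : H := (InnerProductSpace.toDual ℝ H).symm f
    have hrep : ∀ z : H, (inner ℝ y₀ z : ℝ) = f z := fun z => InnerProductSpace.toDual_symm_apply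
    have hsum : Summable (fun i => ‖(inner ℝ (u i) y₀ : ℝ)‖ ^ 2) := hu.inner_products_summable y₀
    have h2 : Tendsto (fun i => ‖(inner ℝ (u i) y₀ : ℝ)‖ ^ 2) atTop (nhds 0) :=
      hsum.tendsto_atTop_zero
    have h3 : Tendsto (fun i => ‖(inner ℝ (u i) y₀ : ℝ)‖) atTop (nhds 0) := by
      have := (Real.continuous_sqrt.tendsto 0).comp h2
      simpa [Function.comp_def, Real.sqrt_sq_eq_abs, Real.norm_eq_abs] using this
    have h4 : Tendsto (fun i => (inner ℝ (u i) y₀ : ℝ)) atTop (nhds 0) :=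
      tendsto_zero_iff_norm_tendsto_zero.mpr h3
    have heq : (fun i => v i k) = fun i => (inner ℝ (u i) y₀ : ℝ) := by
      funext i
      rw [← real_inner_comm (u i) y₀, hrep (u i)]
      rfl
    rw [heq]; exact h4
  -- tails are small
  have htail : ∀ (i K0 : ℕ) (ε : ℝ), 0 < ε → ∃ K, K0 < K ∧ ∀ k, K ≤ k → |v i k| < ε := by
    intro i K0 ε hε
    have h0 : Tendsto (⇑(v i) : ℕ → ℝ) atTop (nhds 0) := by
      have := (v i).zero_at_infty'
      rwa [cocompact_eq_atTop] at this
    have hev : ∀ᶠ k in atTop, |v i k| < ε := by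
      have := Metric.tendsto_nhds.mp h0 ε hε
      simpa [Real.dist_eq] using this
    obtain ⟨K1, hK1⟩ := eventually_atTop.mp hev
    exact ⟨max K1 (K0 + 1), lt_of_lt_of_le (Nat.lt_succ_self K0) (le_max_right _ _),
      fun k hk => hK1 k (le_trans (le_max_left _ _) hk)⟩
  -- heads are eventually small
  have hhead : ∀ (m K : ℕ) (ε : ℝ), 0 < ε → ∃ i, m < i ∧ ∀ k, k < K → |v i k| < ε := by
    intro m K ε hε
    have hone : ∀ k : ℕ, ∀ᶠ i in atTop, |v i k| < ε := by
      intro k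
      have := Metric.tendsto_nhds.mp (hcoord k) ε hε
      simpa [Real.dist_eq] using this
    have hev : ∀ᶠ i in atTop, ∀ k ∈ Finset.range K, |v i k| < ε :=
      eventually_all_finset (Finset.range K) |>.mpr fun k _ => hone k
    obtain ⟨i0, hi0⟩ := eventually_atTop.mp hev
    exact ⟨max i0 (m + 1), lt_of_lt_of_le (Nat.lt_succ_self m) (le_max_right _ _),
      fun k hk => hi0 _ (le_max_left _ _) k (Finset.mem_range.mpr hk)⟩
  -- gliding hump construction
  let εs : ℕ → ℝ := fun j => (1 / 2 : ℝ) ^ j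
  have hεpos : ∀ j, 0 < εs j := fun j => by positivity
  choose F hF1 hF2 using fun (m K j : ℕ) => hhead m K (εs j) (hεpos j)
  choose G hG1 hG2 using fun (i K0 j : ℕ) => htail i K0 (εs j) (hεpos j)
  let s : ℕ → ℕ × ℕ := fun j =>
    Nat.rec (F 0 0 0, G (F 0 0 0) 0 0)
      (fun j p => (F p.1 p.2 (j + 1), G (F p.1 p.2 (j + 1)) p.2 (j + 1))) j
  let n : ℕ → ℕ := fun j => (s j).1
  let Kc : ℕ → ℕ := fun j => (s j).2
  have hn_succ : ∀ j, n (j + 1) = F (n j) (Kc j) (j + 1) := fun j => rfl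
  have hKc_succ : ∀ j, Kc (j + 1) = G (F (n j) (Kc j) (j + 1)) (Kc j) (j + 1) := fun j => rfl
  have hn_mono : StrictMono n :=
    strictMono_nat_of_lt_succ fun j => by rw [hn_succ]; exact hF1 (n j) (Kc j) (j + 1)
  have hKc_mono : StrictMono Kc :=
    strictMono_nat_of_lt_succ fun j => by rw [hKc_succ]; exact hG1 _ (Kc j) (j + 1)
  have htailP : ∀ j k, Kc j ≤ k → |v (n j) k| < εs j := by
    intro j
    cases j with
    | zero => exact fun k hk => hG2 (F 0 0 0) 0 0 k hk
    | succ j => exact fun k hk => hG2 (F (n j) (Kc j) (j + 1)) (Kc j) (j + 1) k hk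
  have hheadP : ∀ j k, k < Kc j → |v (n (j + 1)) k| < εs (j + 1) := by
    intro j k hk
    rw [hn_succ]
    exact hF2 (n j) (Kc j) (j + 1) k hk
  -- pointwise estimate on partial sums
  have hpoint : ∀ (N k : ℕ), |(∑ j ∈ range N, v (n j)) k| ≤ C + 2 := by
    intro N k
    have happly : (∑ j ∈ range N, v (n j)) k = ∑ j ∈ range N, v (n j) k :=
      map_sum (⟨⟨fun f => f k, rfl⟩, fun f g => rfl⟩ :
        ZeroAtInftyContinuousMap ℕ ℝ →+ ℝ) _ _
    rw [happly]
    have hex : ∃ j, k < Kc j :=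
      ⟨k + 1, lt_of_lt_of_le (Nat.lt_succ_self k) (hKc_mono.le_apply)⟩
    let j0 := Nat.find hex
    have hj0lt : k < Kc j0 := Nat.find_spec hex
    have hj0min : ∀ j, j < j0 → Kc j ≤ k := fun j hj => Nat.le_of_not_lt (Nat.find_min hex hj)
    have hterm : ∀ j ∈ range N, |v (n j) k| ≤ εs j + (if j = j0 then C else 0) := by
      intro j _
      rcases lt_trichotomy j j0 with h | h | h
      · rw [if_neg (Nat.ne_of_lt h)]
        have := htailP j k (hj0min j h)
        linarith
      · rw [if_pos h]
        have h1 := (zaim_apply_le_norm (v (n j)) k).trans (hvC (n j))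
        have h2 := (hεpos j).le
        linarith
      · obtain ⟨j', rfl⟩ : ∃ j', j = j' + 1 := ⟨j - 1, by omega⟩
        have hk' : k < Kc j' := lt_of_lt_of_le hj0lt (hKc_mono.monotone (by omega : j0 ≤ j'))
        have := hheadP j' k hk'
        rw [if_neg (by omega)]
        linarith
    calc |∑ j ∈ range N, v (n j) k| ≤ ∑ j ∈ range N, |v (n j) k| :=
          Finset.abs_sum_le_sum_abs _ _
      _ ≤ ∑ j ∈ range N, (εs j + if j = j0 then C else 0) := Finset.sum_le_sum hterm
      _ = (∑ j ∈ range N, εs j) + ∑ j ∈ range N, (if j = j0 then C else 0) :=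
          Finset.sum_add_distrib
      _ ≤ 2 + C := by
          have h1 : ∑ j ∈ range N, εs j ≤ 2 := sum_geometric_two_le N
          have h2 : ∑ j ∈ range N, (if j = j0 then C else 0) ≤ C := by
            rw [Finset.sum_ite_eq' (range N) j0 (fun _ => C)]
            split <;> simp [hC0]
          linarith
      _ = C + 2 := by ring
  have hnorm : ∀ N : ℕ, ‖∑ j ∈ range N, v (n j)‖ ≤ C + 2 :=
    fun N => zaim_norm_le _ (by linarith) (hpoint N)
  -- Hilbert space side: norms grow like √N
  have key : ∀ N : ℕ, (N : ℝ) ≤ (Ct * (C + 2)) ^ 2 := by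
    intro N
    let wV : V := ∑ j ∈ range N, (T.symm (u (n j)) : V)
    have hTw : T wV = ∑ j ∈ range N, u (n j) := by
      rw [map_sum]
      refine Finset.sum_congr rfl fun j _ => ?_
      show T (T.symm (u (n j))) = u (n j)
      exact T.apply_symm_apply _
    have horto : Orthonormal ℝ (fun j => u (n j)) := hu.comp n hn_mono.injective
    have hns : ‖T wV‖ ^ 2 = (N : ℝ) := by
      rw [hTw, ← real_inner_self_eq_norm_sq, sum_inner]
      simp_rw [inner_sum, orthonormal_iff_ite.mp horto]
      simp only [Finset.sum_ite_eq, Finset.mem_range, Finset.sum_boole, mul_one]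
      rw [Finset.filter_true_of_mem fun x hx => Finset.mem_range.mp hx, Finset.card_range]
    have hcoe : ((wV : V) : ZeroAtInftyContinuousMap ℕ ℝ) = ∑ j ∈ range N, v (n j) := by
      simp only [wV, Submodule.coe_sum]; rfl
    have hwVnorm : ‖wV‖ ≤ C + 2 := by
      rw [← hcoe_norm wV, hcoe]; exact hnorm N
    have h1 : ‖T wV‖ ≤ Ct * (C + 2) := by
      calc ‖T wV‖ ≤ Ct * ‖wV‖ := hCtb wV
        _ ≤ Ct * (C + 2) := mul_le_mul_of_nonneg_left hwVnorm hCtpos.le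
    calc (N : ℝ) = ‖T wV‖ ^ 2 := hns.symm
      _ ≤ (Ct * (C + 2)) ^ 2 := by
          exact pow_le_pow_left₀ (norm_nonneg _) h1 2
  obtain ⟨N, hN⟩ := exists_nat_gt ((Ct * (C + 2)) ^ 2)
  exact absurd (key N) (not_le.mpr hN)
end
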